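/- arXiv:1202.5120 — 4 statements merged into one kernel-verified Lean document; each statement's English description precedes it below -/
import Mathlib

section
/- Let A be an algebra and S a set of self-adjoint half-commuting elements (abc = cba for a,b,c ∈ S). Then the subalgebra generated by all products ab with a,b ∈ S is commutative. -/
/-- If `S` is a set of self-adjoint half-commuting elements of a
`*`-algebra `A`, then the subalgebra generated by the products `ab`, `a,b ∈ S`,
is commutative. -/
theorem half_commute_even_subalgebra_commutative
    (A : Type*) [Ring A] [Algebra ℂ A] [StarRing A] (S : Set A)
    (hsa : ∀ a ∈ S, star a = a)
    (hhalf : ∀ a ∈ S, ∀ b ∈ S, ∀ c ∈ S, a * b * c = c * b * a) :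
    ∀ x ∈ Algebra.adjoin ℂ {p : A | ∃ a ∈ S, ∃ b ∈ S, p = a * b},
      ∀ y ∈ Algebra.adjoin ℂ {p : A | ∃ a ∈ S, ∃ b ∈ S, p = a * b},
        x * y = y * x := by
  intro x hx y hy
  induction hx, hy using Algebra.adjoin_induction₂ with
  | mem_mem u v hu hv =>
    obtain ⟨a, ha, b, hb, rfl⟩ := hu
    obtain ⟨c, hc, d, hd, rfl⟩ := hv
    calc a * b * (c * d) = a * (b * c * d) := by noncomm_ring
      _ = a * (d * c * b) := by rw [hhalf b hb c hc d hd]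
      _ = a * d * c * b := by noncomm_ring
      _ = c * d * a * b := by rw [hhalf a ha d hd c hc]
      _ = c * d * (a * b) := by noncomm_ring
  | algebraMap_both r₁ r₂ => rw [← map_mul, ← map_mul, mul_comm]
  | algebraMap_left r x hx => exact Algebra.commutes r x
  | algebraMap_right r x hx => exact (Algebra.commutes r x).symm
  | add_left x y z _ _ _ h1 h2 => rw [add_mul, mul_add, h1, h2]
  | add_right x y z _ _ _ h1 h2 => rw [add_mul, mul_add, h1, h2]
  | mul_left x y z _ _ _ h1 h2 => rw [mul_assoc, h2, ← mul_assoc, h1, mul_assoc]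
  | mul_right x y z _ _ _ h1 h2 => rw [← mul_assoc, h1, mul_assoc, h2, ← mul_assoc]
end

section
/- Let G ⊆ U(n) be self-transpose, A = R(G), s the transposition-induced automorphism, and let A_*(G) ⊆ A ⋊ ℂℤ₂ be the subalgebra generated by the elements u_{ij}s. Then A_*(G) is noncommutative if and only if G is doubly non-real, i.e. there exist g ∈ G and indices i,j,k,l with g_{ij}·conj(g_{kl}) ∉ ℝ. -/
open Matrix

/-- The coordinate function `u_{ij} : G → ℂ` of a subgroup `G ⊆ U(n)`. -/
def coordFun (n : ℕ) (G : Subgroup (Matrix.unitaryGroup (Fin n) ℂ)) (i j : Fin n) :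
    G → ℂ :=
  fun g => ((g : Matrix.unitaryGroup (Fin n) ℂ) : Matrix (Fin n) (Fin n) ℂ) i j

/-- Let `G ⊆ U(n)` be a compact self-transpose subgroup, with
transposition automorphism `σG : g ↦ ḡ`. Model the crossed product
`R(G) ⋊ ℂℤ₂` inside an ambient algebra `B`: `ι` embeds the functions on `G`,
and the group-like element `S` satisfies `S² = 1`, `S* = S`,
`S·ι(f) = ι(f ∘ σG)·S`, with the components `ι(f) + ι(g)·S` independent.
Then the subalgebra `A_*(G)` generated by the elements `u_{ij}·S` is
noncommutative iff `G` is doubly non-real, i.e. iff there are `g ∈ G` and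
indices `i,j,k,l` with `g_{ij}·conj(g_{kl}) ∉ ℝ`. -/
theorem halfLiberated_noncommutative_iff_doubly_nonreal
    (n : ℕ) (G : Subgroup (Matrix.unitaryGroup (Fin n) ℂ))
    (hcompact : IsCompact (G : Set (Matrix.unitaryGroup (Fin n) ℂ)))
    (σG : G ≃* G)
    (hσG : ∀ g : G,
      ((σG g : Matrix.unitaryGroup (Fin n) ℂ) : Matrix (Fin n) (Fin n) ℂ)
        = ((g : Matrix.unitaryGroup (Fin n) ℂ) : Matrix (Fin n) (Fin n) ℂ).map (starRingEnd ℂ))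
    (B : Type*) [Ring B] [Algebra ℂ B] [StarRing B]
    (ι : (G → ℂ) →ₐ[ℂ] B) (hstarι : ∀ f : G → ℂ, star (ι f) = ι (star f))
    (S : B) (hS2 : S * S = 1) (hSstar : star S = S)
    (hcross : ∀ f : G → ℂ, S * ι f = ι (f ∘ σG) * S)
    (hfree : ∀ f g : G → ℂ, ι f + ι g * S = 0 → f = 0 ∧ g = 0) :
    (¬ ∀ x ∈ Algebra.adjoin ℂ {b : B | ∃ i j : Fin n, b = ι (coordFun n G i j) * S},
        ∀ y ∈ Algebra.adjoin ℂ {b : B | ∃ i j : Fin n, b = ι (coordFun n G i j) * S},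
          x * y = y * x)
      ↔ ∃ g ∈ G, ∃ i j k l : Fin n,
          ((g : Matrix (Fin n) (Fin n) ℂ) i j
            * (starRingEnd ℂ) ((g : Matrix (Fin n) (Fin n) ℂ) k l)).im ≠ 0 := by
  -- injectivity of ι
  have hinj : ∀ f : G → ℂ, ι f = 0 → f = 0 := by
    intro f hf
    exact (hfree f 0 (by simp [hf])).1
  -- composition with σG conjugates coordinate functions
  have hcomp : ∀ i j : Fin n,
      (coordFun n G i j) ∘ σG = fun x => (starRingEnd ℂ) (coordFun n G i j x) := by
    intro i j
    funext x
    simp only [Function.comp_apply, coordFun]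
    rw [hσG x]
    rfl
  -- product of generators
  have hprod : ∀ f g : G → ℂ, (ι f * S) * (ι g * S) = ι (f * (g ∘ σG)) := by
    intro f g
    rw [mul_assoc, ← mul_assoc S (ι g) S, hcross, mul_assoc, hS2, mul_one, ← _root_.map_mul]
  have hprodCoord : ∀ i j k l : Fin n,
      (ι (coordFun n G i j) * S) * (ι (coordFun n G k l) * S)
        = ι (fun x => coordFun n G i j x * (starRingEnd ℂ) (coordFun n G k l x)) := by
    intro i j k l
    rw [hprod, hcomp]
    rfl
  constructor
  · -- noncommutative → doubly non-real
    intro hnc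
    by_contra hno
    push_neg at hno
    apply hnc
    intro x hx y hy
    have key : ∀ b ∈ {b : B | ∃ i j : Fin n, b = ι (coordFun n G i j) * S},
        ∀ c ∈ {b : B | ∃ i j : Fin n, b = ι (coordFun n G i j) * S}, Commute b c := by
      rintro _ ⟨i, j, rfl⟩ _ ⟨k, l, rfl⟩
      show _ = _
      rw [hprodCoord, hprodCoord]
      congr 1
      funext x
      have h1 := hno (x : Matrix.unitaryGroup (Fin n) ℂ) x.2 i j k l
      have h2 : (coordFun n G i j x * (starRingEnd ℂ) (coordFun n G k l x)) =
          (starRingEnd ℂ) (coordFun n G i j x * (starRingEnd ℂ) (coordFun n G k l x)) := by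
        exact ((Complex.conj_eq_iff_im).2 h1).symm
      rw [h2]
      simp [coordFun, mul_comm]
    have : Commute x y := by
      have hyx : ∀ b ∈ {b : B | ∃ i j : Fin n, b = ι (coordFun n G i j) * S}, Commute b y := by
        intro b hb
        exact Algebra.commute_of_mem_adjoin_of_forall_mem_commute hy (key b hb)
      induction hx using Algebra.adjoin_induction with
      | mem b hb => exact hyx b hb
      | algebraMap r => exact Algebra.commutes r y
      | add a b _ _ ha hb => exact ha.add_left hb
      | mul a b _ _ ha hb => exact ha.mul_left hb
    exact this
  · -- doubly non-real → noncommutative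
    rintro ⟨g, hg, i, j, k, l, him⟩ hcomm
    set s : Set B := {b : B | ∃ i j : Fin n, b = ι (coordFun n G i j) * S}
    have hx : ι (coordFun n G i j) * S ∈ Algebra.adjoin ℂ s :=
      Algebra.subset_adjoin ⟨i, j, rfl⟩
    have hy : ι (coordFun n G k l) * S ∈ Algebra.adjoin ℂ s :=
      Algebra.subset_adjoin ⟨k, l, rfl⟩
    have h := hcomm _ hx _ hy
    rw [hprodCoord, hprodCoord] at h
    have h0 : ((fun x => coordFun n G i j x * (starRingEnd ℂ) (coordFun n G k l x)) :
        G → ℂ) - (fun x => coordFun n G k l x * (starRingEnd ℂ) (coordFun n G i j x)) = 0 := by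
      apply hinj
      rw [map_sub, h, sub_self]
    have heq : ∀ x : G, coordFun n G i j x * (starRingEnd ℂ) (coordFun n G k l x)
        = coordFun n G k l x * (starRingEnd ℂ) (coordFun n G i j x) := by
      intro x
      have := congrFun h0 x
      simpa [sub_eq_zero] using this
    have hz := heq ⟨g, hg⟩
    apply him
    rw [← Complex.conj_eq_iff_im]
    have : (starRingEnd ℂ) (coordFun n G i j ⟨g, hg⟩ * (starRingEnd ℂ) (coordFun n G k l ⟨g, hg⟩))
        = coordFun n G k l ⟨g, hg⟩ * (starRingEnd ℂ) (coordFun n G i j ⟨g, hg⟩) := by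
      simp [mul_comm]
    rw [show ((g : Matrix (Fin n) (Fin n) ℂ) i j) = coordFun n G i j ⟨g, hg⟩ from rfl,
        show ((g : Matrix (Fin n) (Fin n) ℂ) k l) = coordFun n G k l ⟨g, hg⟩ from rfl,
        this, hz]
end

section
/- In the crossed product R(G) ⋊ ℂℤ₂ (G ⊆ U(n) self-transpose, s the transposition automorphism), the matrix v = (u_{ij}s) is orthogonal: Σ_k (u_{ik}s)(u_{jk}s) = δ_{ij}·1 and Σ_k (u_{ki}s)(u_{kj}s) = δ_{ij}·1. -/
open Matrix

/-- In the crossed product `R(G) ⋊ ℂℤ₂` (modelled inside an ambient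
algebra `B` as in the main construction), the matrix `v = (u_{ij}·S)` is
orthogonal: `Σ_k (u_{ik}S)(u_{jk}S) = δ_{ij}·1` and
`Σ_k (u_{ki}S)(u_{kj}S) = δ_{ij}·1`. -/
theorem halfLiberated_matrix_orthogonal
    (n : ℕ) (G : Subgroup (Matrix.unitaryGroup (Fin n) ℂ))
    (hcompact : IsCompact (G : Set (Matrix.unitaryGroup (Fin n) ℂ)))
    (σG : G ≃* G)
    (hσG : ∀ g : G,
      ((σG g : Matrix.unitaryGroup (Fin n) ℂ) : Matrix (Fin n) (Fin n) ℂ)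
        = ((g : Matrix.unitaryGroup (Fin n) ℂ) : Matrix (Fin n) (Fin n) ℂ).map (starRingEnd ℂ))
    (B : Type*) [Ring B] [Algebra ℂ B] [StarRing B]
    (ι : (G → ℂ) →ₐ[ℂ] B) (hstarι : ∀ f : G → ℂ, star (ι f) = ι (star f))
    (S : B) (hS2 : S * S = 1) (hSstar : star S = S)
    (hcross : ∀ f : G → ℂ, S * ι f = ι (f ∘ σG) * S) :
    ∀ i j : Fin n,
      (∑ k : Fin n, (ι (coordFun n G i k) * S) * (ι (coordFun n G j k) * S)
        = if i = j then (1 : B) else 0) ∧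
      (∑ k : Fin n, (ι (coordFun n G k i) * S) * (ι (coordFun n G k j) * S)
        = if i = j then (1 : B) else 0) := by
  intro i j
  have key : ∀ u v : G → ℂ,
      (ι u * S) * (ι v * S) = ι (u * (v ∘ σG)) := by
    intro u v
    rw [mul_assoc (ι u) S, ← mul_assoc S (ι v) S, hcross, mul_assoc (ι (v ∘ ⇑σG)) S S,
      hS2, mul_one, ← _root_.map_mul]
  have hconj : ∀ (g : G) (a b : Fin n),
      coordFun n G a b (σG g) = starRingEnd ℂ (coordFun n G a b g) := by
    intro g a b
    simp [coordFun, hσG g]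
  constructor
  · have hfun : (∑ k : Fin n, coordFun n G i k * (coordFun n G j k ∘ σG))
        = fun _ : G => if i = j then (1 : ℂ) else 0 := by
      funext g
      simp only [Finset.sum_apply, Pi.mul_apply, Function.comp_apply, hconj]
      have h := (g : Matrix.unitaryGroup (Fin n) ℂ).2.2
      have h' := congrArg (fun M : Matrix (Fin n) (Fin n) ℂ => M i j) h
      simp only [Matrix.mul_apply, Matrix.star_apply, Matrix.one_apply] at h'
      exact h'
    rw [Finset.sum_congr rfl fun k _ => key _ _, ← map_sum, hfun]
    split
    · exact map_one ι
    · exact map_zero ι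
  · have hfun : (∑ k : Fin n, coordFun n G k i * (coordFun n G k j ∘ σG))
        = fun _ : G => if i = j then (1 : ℂ) else 0 := by
      funext g
      simp only [Finset.sum_apply, Pi.mul_apply, Function.comp_apply, hconj]
      have h := Matrix.UnitaryGroup.star_mul_self (g : Matrix.unitaryGroup (Fin n) ℂ)
      have h' := congrArg (fun M : Matrix (Fin n) (Fin n) ℂ => M j i) h
      simp only [Matrix.mul_apply, Matrix.star_apply, Matrix.one_apply] at h'
      calc ∑ k, coordFun n G k i g * starRingEnd ℂ (coordFun n G k j g)
          = ∑ k, star ((g : Matrix.unitaryGroup (Fin n) ℂ).1 k j) *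
              (g : Matrix.unitaryGroup (Fin n) ℂ).1 k i := by
            exact Finset.sum_congr rfl fun k _ => mul_comm _ _
        _ = if i = j then 1 else 0 := by
            rw [h']
            simp [eq_comm]
    rw [Finset.sum_congr rfl fun k _ => key _ _, ← map_sum, hfun]
    split
    · exact map_one ι
    · exact map_zero ι
end

section
/- The map φ from the free *-algebra on 2n² self-adjoint generators to A_u(n) defined by sending generators to (u_{ij}+u_{ij}*)/2 and (u_{ij}−u_{ij}*)/(2ω) (ω a primitive 4th root of unity) realizes the standard generators of A_u(n) as ℂ-linear combinations x_{ij} + ω·x_{n+i,j} of 2n×2n 'orthogonal-type' self-adjoint elements; concretely: in any *-algebra generated by elements u_{ij} with u = (u_{ij}) and ū = (u_{ij}*) unitary, the real and imaginary parts a_{ij} = (u_{ij}+u_{ij}*)/2, b_{ij} = (u_{ij}−u_{ij}*)/(2ω) assemble into a 2n×2n self-adjoint matrix [[a, −b],[b, a]] which is orthogonal (equals its own transpose-inverse). -/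
open Matrix

section Aux

variable {B : Type*} [Ring B] [Algebra ℂ B] [StarRing B] [StarModule ℂ B]

private lemma key1 (v w : B) :
    (((1:ℂ)/2) • (v + star v)) * (((1:ℂ)/2) • (w + star w)) +
      ((2*Complex.I)⁻¹ • (v - star v)) * ((2*Complex.I)⁻¹ • (w - star w)) =
    ((1:ℂ)/2) • (v * star w + star v * w) := by
  rw [smul_mul_smul_comm, smul_mul_smul_comm]
  have c2 : ((2 : ℂ) * Complex.I)⁻¹ * (2 * Complex.I)⁻¹ = -(1/4 : ℂ) := by
    rw [← mul_inv]
    have h4 : ((2:ℂ) * Complex.I) * (2 * Complex.I) = -4 := by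
      linear_combination (4:ℂ) * Complex.I_sq
    rw [h4]; norm_num
  rw [c2]
  simp only [add_mul, mul_add, sub_mul, mul_sub]
  module

private lemma key2 (v w : B) :
    (((1:ℂ)/2) • (v + star v)) * ((2*Complex.I)⁻¹ • (w - star w)) -
      ((2*Complex.I)⁻¹ • (v - star v)) * (((1:ℂ)/2) • (w + star w)) =
    (2*Complex.I)⁻¹ • (star v * w - v * star w) := by
  rw [smul_mul_smul_comm, smul_mul_smul_comm]
  simp only [add_mul, mul_add, sub_mul, mul_sub]
  module

private lemma star_a (v : B) :
    star (((1:ℂ)/2) • (v + star v)) = ((1:ℂ)/2) • (v + star v) := by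
  simp [star_smul, add_comm, Complex.star_def, map_div₀]

private lemma star_b (v : B) :
    star ((2*Complex.I)⁻¹ • (v - star v)) = (2*Complex.I)⁻¹ • (v - star v) := by
  rw [star_smul, star_sub, star_star]
  have : star ((2*Complex.I)⁻¹ : ℂ) = -(2*Complex.I)⁻¹ := by
    simp [Complex.star_def, map_inv₀, Complex.conj_I]
  rw [this, neg_smul, ← smul_neg, neg_sub]

private lemma sum_key1 {n : ℕ} (v w : Fin n → B) :
    ((∑ k, (((1:ℂ)/2) • (v k + star (v k))) * (((1:ℂ)/2) • (w k + star (w k)))) +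
      ∑ k, ((2*Complex.I)⁻¹ • (v k - star (v k))) * ((2*Complex.I)⁻¹ • (w k - star (w k)))) =
    ((1:ℂ)/2) • ((∑ k, v k * star (w k)) + ∑ k, star (v k) * w k) := by
  rw [← Finset.sum_add_distrib]
  simp_rw [key1]
  rw [← Finset.smul_sum, Finset.sum_add_distrib]

private lemma sum_key2 {n : ℕ} (v w : Fin n → B) :
    ((∑ k, (((1:ℂ)/2) • (v k + star (v k))) * ((2*Complex.I)⁻¹ • (w k - star (w k)))) -
      ∑ k, ((2*Complex.I)⁻¹ • (v k - star (v k))) * (((1:ℂ)/2) • (w k + star (w k)))) =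
    (2*Complex.I)⁻¹ • ((∑ k, star (v k) * w k) - ∑ k, v k * star (w k)) := by
  rw [← Finset.sum_sub_distrib]
  simp_rw [key2]
  rw [← Finset.smul_sum, Finset.sum_sub_distrib]

private lemma half_smul (d : B) (hd : d = 1 ∨ d = 0) : ((1:ℂ)/2) • (d + d) = d := by
  rcases hd with h | h <;> subst h
  · rw [← two_smul ℂ (1:B), smul_smul]; norm_num
  · simp

end Aux

/-- In any `*`-algebra generated by elements `u_{ij}` such that
`u = (u_{ij})` and `ū = (u_{ij}*)` are unitary, the real and imaginary parts
`a_{ij} = (u_{ij} + u_{ij}*)/2`, `b_{ij} = (u_{ij} − u_{ij}*)/(2i)` assemble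
into a `2n × 2n` matrix `[[a, −b], [b, a]]` with self-adjoint entries which is
orthogonal: `x xᵀ = 1 = xᵀ x`. -/
theorem unitary_real_imaginary_parts_orthogonal
    (n : ℕ) (B : Type*) [Ring B] [Algebra ℂ B] [StarRing B] [StarModule ℂ B]
    (u : Fin n → Fin n → B)
    (h1 : ∀ i j, ∑ k, u i k * star (u j k) = if i = j then (1 : B) else 0)
    (h2 : ∀ i j, ∑ k, star (u k i) * u k j = if i = j then (1 : B) else 0)
    (h3 : ∀ i j, ∑ k, star (u i k) * u j k = if i = j then (1 : B) else 0)
    (h4 : ∀ i j, ∑ k, u k i * star (u k j) = if i = j then (1 : B) else 0) :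
    ∀ (a b : Fin n → Fin n → B),
      (∀ i j, a i j = ((1 : ℂ)/2) • (u i j + star (u i j))) →
      (∀ i j, b i j = (2 * Complex.I)⁻¹ • (u i j - star (u i j))) →
      ∀ x : Matrix (Fin n ⊕ Fin n) (Fin n ⊕ Fin n) B,
        x = Matrix.fromBlocks (Matrix.of a) (-(Matrix.of b)) (Matrix.of b) (Matrix.of a) →
        (∀ p q, star (x p q) = x p q) ∧ x * xᵀ = 1 ∧ xᵀ * x = 1 := by
  intro a b ha hb x hx
  subst hx
  have hif : ∀ i j : Fin n, (if i = j then (1:B) else 0) = 1 ∨ (if i = j then (1:B) else 0) = 0 := by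
    intro i j; split <;> simp
  refine ⟨?_, ?_, ?_⟩
  · rintro (p | p) (q | q) <;>
      simp only [fromBlocks_apply₁₁, fromBlocks_apply₁₂, fromBlocks_apply₂₁,
        fromBlocks_apply₂₂, of_apply, Matrix.neg_apply, star_neg, neg_inj] <;>
      simp only [ha, hb] <;> first | exact star_a _ | exact star_b _
  · ext p q
    rcases p with i | i <;> rcases q with j | j <;>
      simp only [mul_apply, transpose_apply, fromBlocks_apply₁₁, fromBlocks_apply₁₂,
        fromBlocks_apply₂₁, fromBlocks_apply₂₂, of_apply, Matrix.neg_apply,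
        Fintype.sum_sum_type, one_apply, Sum.inl.injEq, Sum.inr.injEq,
        neg_mul_neg, mul_neg, neg_mul, neg_neg, reduceCtorEq, if_false]
    · simp_rw [ha, hb]
      rw [sum_key1, h1, h3, half_smul _ (hif i j)]
    · simp_rw [ha, hb, Finset.sum_neg_distrib]
      rw [← sub_eq_add_neg, sum_key2, h3, h1]
      split <;> simp
    · simp_rw [ha, hb, Finset.sum_neg_distrib]
      rw [← sub_eq_add_neg, ← neg_sub, sum_key2, h3, h1]
      split <;> simp
    · simp_rw [ha, hb]
      rw [add_comm, sum_key1, h1, h3, half_smul _ (hif i j)]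
  · ext p q
    rcases p with i | i <;> rcases q with j | j <;>
      simp only [mul_apply, transpose_apply, fromBlocks_apply₁₁, fromBlocks_apply₁₂,
        fromBlocks_apply₂₁, fromBlocks_apply₂₂, of_apply, Matrix.neg_apply,
        Fintype.sum_sum_type, one_apply, Sum.inl.injEq, Sum.inr.injEq,
        neg_mul_neg, mul_neg, neg_mul, neg_neg, reduceCtorEq, if_false]
    · simp_rw [ha, hb]
      rw [sum_key1 (fun k => u k i) (fun k => u k j), h4, h2, half_smul _ (hif i j)]
    · simp_rw [ha, hb, Finset.sum_neg_distrib]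
      rw [neg_add_eq_sub, ← neg_sub, sum_key2 (fun k => u k i) (fun k => u k j), h2, h4]
      split <;> simp
    · simp_rw [ha, hb, Finset.sum_neg_distrib]
      rw [neg_add_eq_sub, sum_key2 (fun k => u k i) (fun k => u k j), h2, h4]
      split <;> simp
    · simp_rw [ha, hb]
      rw [add_comm, sum_key1 (fun k => u k i) (fun k => u k j), h4, h2, half_smul _ (hif i j)]
end
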